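/- For every n ≥ 1 and every odd positive integer r, the r-th central moment of the Gepner statistic over W(n,n,n) vanishes: Σ_{w ∈ W(n,n,n)} (gep(w) − n³/2)^r = 0 (as an identity in ℚ). -/

import Mathlib

def gep {α : Type*} [LinearOrder α] (w : List α) : ℕ :=
  (Finset.univ.filter (fun t : Fin w.length × Fin w.length × Fin w.length =>
    t.1 < t.2.1 ∧ t.2.1 < t.2.2 ∧
      ((w.get t.1 < w.get t.2.2 ∧ w.get t.2.2 < w.get t.2.1) ∨
       (w.get t.2.1 < w.get t.1 ∧ w.get t.1 < w.get t.2.2) ∨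
       (w.get t.2.2 < w.get t.2.1 ∧ w.get t.2.1 < w.get t.1)))).card

def W (a1 a2 a3 : ℕ) : Finset (List ℕ) :=
  ((List.replicate a1 1 ++ List.replicate a2 2 ++ List.replicate a3 3).permutations).toFinset

namespace GepAux

def c (x : ℕ) : ℕ := 4 - x

def sel (w : List ℕ) (v : ℕ) (t : Fin w.length × Fin w.length × Fin w.length) : Fin w.length :=
  if w.get t.1 = v then t.1 else if w.get t.2.1 = v then t.2.1 else t.2.2

def srt3 {m : ℕ} (p q r : Fin m) : Fin m × Fin m × Fin m :=
  if p < q then (if q < r then (p,q,r) else if p < r then (p,r,q) else (r,p,q))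
  else (if p < r then (q,p,r) else if q < r then (q,r,p) else (r,q,p))

lemma card_filter_get (w : List ℕ) (v : ℕ) :
    (Finset.univ.filter fun i : Fin w.length => w.get i = v).card = w.count v := by
  have h1 : w.count v = (List.finRange w.length).countP (fun i => w.get i == v) := by
    conv_lhs => rw [← List.map_get_finRange w]
    rw [List.count_eq_countP, List.countP_map]
    rfl
  have h2 : (Finset.filter (fun i => w.get i = v) (List.finRange w.length).toFinset)
      = ((List.finRange w.length).filter (fun i => w.get i == v)).toFinset := by
    ext i; simp
  rw [h1, List.countP_eq_length_filter, ← List.toFinset_finRange w.length, h2,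
    List.toFinset_card_of_nodup ((List.nodup_finRange _).filter _)]

lemma mem_W_iff {n : ℕ} {w : List ℕ} : w ∈ W n n n ↔
    w.Perm (List.replicate n 1 ++ List.replicate n 2 ++ List.replicate n 3) := by
  simp [W, List.mem_toFinset, List.mem_permutations]

lemma counts {n : ℕ} {w : List ℕ} (hw : w ∈ W n n n) :
    w.count 1 = n ∧ w.count 2 = n ∧ w.count 3 = n := by
  have h := mem_W_iff.1 hw
  refine ⟨?_, ?_, ?_⟩ <;>
    simp [h.count_eq, List.count_append, List.count_replicate]

lemma entries {n : ℕ} {w : List ℕ} (hw : w ∈ W n n n) :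
    ∀ x ∈ w, x = 1 ∨ x = 2 ∨ x = 3 := by
  intro x hx
  have h := (mem_W_iff.1 hw).mem_iff.1 hx
  simp [List.mem_append, List.mem_replicate] at h
  omega

lemma map_mem {n : ℕ} {w : List ℕ} (hw : w ∈ W n n n) : w.map c ∈ W n n n := by
  rw [mem_W_iff] at hw ⊢
  refine ((hw.map c).trans ?_)
  rw [List.perm_iff_count]
  intro a
  simp [c, List.map_append, List.map_replicate, List.count_append, List.count_replicate]
  norm_num
  split_ifs <;> omega

lemma map_map_self {n : ℕ} {w : List ℕ} (hw : w ∈ W n n n) : (w.map c).map c = w := by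
  rw [List.map_map]
  conv_rhs => rw [← List.map_id w]
  apply List.map_congr_left
  intro a ha
  have := entries hw a ha
  simp [c]; omega

end GepAux

namespace GepAux

lemma key (w : List ℕ) (hw : ∀ x ∈ w, x = 1 ∨ x = 2 ∨ x = 3) :
    gep w + gep (w.map c) = w.count 1 * w.count 2 * w.count 3 := by
  classical
  have hb : ∀ i : Fin w.length, w.get i = 1 ∨ w.get i = 2 ∨ w.get i = 3 :=
    fun i => hw _ (w.get_mem i)
  have hb' : ∀ i : Fin w.length, w[(i : ℕ)] = 1 ∨ w[(i : ℕ)] = 2 ∨ w[(i : ℕ)] = 3 := by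
    intro i; simpa [List.get_eq_getElem] using hb i
  set Podd : Fin w.length × Fin w.length × Fin w.length → Prop := fun t =>
    t.1 < t.2.1 ∧ t.2.1 < t.2.2 ∧
      ((w.get t.1 < w.get t.2.2 ∧ w.get t.2.2 < w.get t.2.1) ∨
       (w.get t.2.1 < w.get t.1 ∧ w.get t.1 < w.get t.2.2) ∨
       (w.get t.2.2 < w.get t.2.1 ∧ w.get t.2.1 < w.get t.1)) with hPodd
  set Peven : Fin w.length × Fin w.length × Fin w.length → Prop := fun t =>
    t.1 < t.2.1 ∧ t.2.1 < t.2.2 ∧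
      ((w.get t.1 < w.get t.2.1 ∧ w.get t.2.1 < w.get t.2.2) ∨
       (w.get t.2.2 < w.get t.1 ∧ w.get t.1 < w.get t.2.1) ∨
       (w.get t.2.1 < w.get t.2.2 ∧ w.get t.2.2 < w.get t.1)) with hPeven
  set Pdist : Fin w.length × Fin w.length × Fin w.length → Prop := fun t =>
    t.1 < t.2.1 ∧ t.2.1 < t.2.2 ∧
      (w.get t.1 ≠ w.get t.2.1 ∧ w.get t.2.1 ≠ w.get t.2.2 ∧ w.get t.1 ≠ w.get t.2.2)
    with hPdist
  -- Step 1 : gep of the complement counts even patterns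
  have hlen : (w.map c).length = w.length := List.length_map c
  have hget : ∀ i : Fin (w.map c).length,
      (w.map c).get i = c (w.get (Fin.cast hlen i)) := by
    intro i
    simp [List.get_eq_getElem, List.getElem_map, c]
  have step1 : gep (w.map c) = (Finset.univ.filter Peven).card := by
    unfold gep
    apply Finset.card_nbij'
      (i := fun t => (Fin.cast hlen t.1, Fin.cast hlen t.2.1, Fin.cast hlen t.2.2))
      (j := fun t => (Fin.cast hlen.symm t.1, Fin.cast hlen.symm t.2.1, Fin.cast hlen.symm t.2.2))
    · intro t ht
      simp only [Finset.mem_coe, Finset.mem_filter, Finset.mem_univ, true_and, hget, Fin.lt_def,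
        Fin.coe_cast] at ht ⊢
      obtain ⟨h1, h2, h3⟩ := ht
      refine ⟨h1, h2, ?_⟩
      have ha := hb (Fin.cast hlen t.1)
      have hbb := hb (Fin.cast hlen t.2.1)
      have hc := hb (Fin.cast hlen t.2.2)
      simp only [c] at h3
      simp only [hPeven]
      omega
    · intro t ht
      simp only [Finset.mem_coe, Finset.mem_filter, Finset.mem_univ, true_and, hget, Fin.lt_def,
        Fin.coe_cast, hPeven] at ht ⊢
      obtain ⟨h1, h2, h3⟩ := ht
      refine ⟨h1, h2, ?_⟩
      have ha := hb t.1
      have hbb := hb t.2.1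
      have hc := hb t.2.2
      simp only [c, Fin.cast_cast, Fin.cast_eq_self]
      omega
    · intro t ht; rfl
    · intro t ht; rfl
  -- Step 2 : odd + even = distinct
  have hdisj : Disjoint (Finset.univ.filter Podd) (Finset.univ.filter Peven) := by
    rw [Finset.disjoint_left]
    intro t ht1 ht2
    simp only [Finset.mem_filter, Finset.mem_univ, true_and, hPodd, hPeven] at ht1 ht2
    omega
  have hunion : (Finset.univ.filter Podd) ∪ (Finset.univ.filter Peven)
      = Finset.univ.filter Pdist := by
    rw [← Finset.filter_or]
    apply Finset.filter_congr
    intro t _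
    simp only [hPodd, hPeven, hPdist, ← and_or_left]
    constructor
    · rintro ⟨h1, h⟩; exact ⟨h1, by omega⟩
    · rintro ⟨h1, h⟩; exact ⟨h1, by omega⟩
  have step2 : gep w + gep (w.map c) = (Finset.univ.filter Pdist).card := by
    have hg : gep w = (Finset.univ.filter Podd).card := rfl
    rw [hg, step1, ← Finset.card_union_of_disjoint hdisj, hunion]
  -- Step 3 : distinct triples are counted by products of positions
  have step3 : (Finset.univ.filter Pdist).card = w.count 1 * w.count 2 * w.count 3 := by
    rw [← card_filter_get w 1, ← card_filter_get w 2, ← card_filter_get w 3]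
    have hT : ((Finset.univ.filter fun i : Fin w.length => w.get i = 1) ×ˢ
        ((Finset.univ.filter fun i : Fin w.length => w.get i = 2) ×ˢ
         (Finset.univ.filter fun i : Fin w.length => w.get i = 3)))
        = (Finset.univ.filter fun t : Fin w.length × Fin w.length × Fin w.length =>
            w.get t.1 = 1 ∧ w.get t.2.1 = 2 ∧ w.get t.2.2 = 3) := by
      ext t
      simp [Finset.mem_product, Finset.mem_filter, and_assoc]
    rw [mul_assoc, ← Finset.card_product, ← Finset.card_product, hT]
    apply Finset.card_nbij' (i := fun t => (sel w 1 t, sel w 2 t, sel w 3 t))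
      (j := fun t => srt3 t.1 t.2.1 t.2.2)
    · intro t ht
      simp only [Finset.mem_coe, Finset.mem_filter, Finset.mem_univ, true_and, hPdist] at ht
      obtain ⟨h1, h2, d1, d2, d3⟩ := ht
      simp only [List.get_eq_getElem] at d1 d2 d3
      have ha := hb' t.1
      have hbb := hb' t.2.1
      have hc := hb' t.2.2
      simp only [Finset.mem_coe, Finset.mem_filter, Finset.mem_univ, true_and, List.get_eq_getElem]
      rcases ha with ha | ha | ha <;> rcases hbb with hbb | hbb | hbb <;>
        rcases hc with hc | hc | hc <;>
        first
          | (exfalso; omega)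
          | (refine ⟨?_, ?_, ?_⟩ <;> simp [sel, ha, hbb, hc])
    · intro t ht
      simp only [Finset.mem_coe, Finset.mem_filter, Finset.mem_univ, true_and] at ht
      obtain ⟨hp, hq, hr⟩ := ht
      obtain ⟨p, q, r⟩ := t
      simp only at hp hq hr
      have hpq : (p : ℕ) ≠ (q : ℕ) := by
        intro h; rw [Fin.val_injective h, hq] at hp; exact absurd hp (by norm_num)
      have hpr : (p : ℕ) ≠ (r : ℕ) := by
        intro h; rw [Fin.val_injective h, hr] at hp; exact absurd hp (by norm_num)
      have hqr : (q : ℕ) ≠ (r : ℕ) := by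
        intro h; rw [Fin.val_injective h, hr] at hq; exact absurd hq (by norm_num)
      simp only [Finset.mem_coe, Finset.mem_filter, Finset.mem_univ, true_and, hPdist, srt3]
      split_ifs with e1 e2 e3 e4 e5 <;>
        (refine ⟨?_, ?_, ?_, ?_, ?_⟩ <;>
          · simp only [hp, hq, hr, Fin.lt_def] at *
            omega)
    · intro t ht
      simp only [Finset.mem_coe, Finset.mem_filter, Finset.mem_univ, true_and, hPdist] at ht
      obtain ⟨h1, h2, d1, d2, d3⟩ := ht
      obtain ⟨i, j, k⟩ := t
      simp only [List.get_eq_getElem] at h1 h2 d1 d2 d3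
      have h3 : i < k := h1.trans h2
      have n1 : ¬ j < i := by exact fun h => absurd h1 h.asymm
      have n2 : ¬ k < j := by exact fun h => absurd h2 h.asymm
      have n3 : ¬ k < i := by exact fun h => absurd h3 h.asymm
      have ha := hb' i
      have hbb := hb' j
      have hc := hb' k
      rcases ha with ha | ha | ha <;> rcases hbb with hbb | hbb | hbb <;>
        rcases hc with hc | hc | hc <;>
        first
          | (exfalso; omega)
          | (simp [sel, srt3, List.get_eq_getElem, ha, hbb, hc, h1, h2, h3, n1, n2, n3])
    · intro t ht
      simp only [Finset.mem_coe, Finset.mem_filter, Finset.mem_univ, true_and] at ht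
      obtain ⟨hp, hq, hr⟩ := ht
      obtain ⟨p, q, r⟩ := t
      simp only [List.get_eq_getElem] at hp hq hr
      simp only [srt3]
      split_ifs <;> simp [sel, List.get_eq_getElem, hp, hq, hr]
  rw [step2, step3]

end GepAux

theorem gep_words_odd_central_moments (n : ℕ) (hn : 1 ≤ n) (r : ℕ) (hr : Odd r) (hr' : 0 < r) :
    ∑ w ∈ W n n n, ((gep w : ℚ) - (n : ℚ) ^ 3 / 2) ^ r = 0 := by
  apply Finset.sum_involution (g := fun w _ => w.map GepAux.c)
  · intro w hw
    have hkey := GepAux.key w (GepAux.entries hw)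
    obtain ⟨c1, c2, c3⟩ := GepAux.counts hw
    rw [c1, c2, c3] at hkey
    have hcast : (gep (w.map GepAux.c) : ℚ) = (n : ℚ) ^ 3 - gep w := by
      have : ((gep w + gep (w.map GepAux.c) : ℕ) : ℚ) = ((n * n * n : ℕ) : ℚ) := by
        exact_mod_cast hkey
      push_cast at this
      linarith [this]
    rw [hcast]
    have hx : (n : ℚ) ^ 3 - (gep w : ℚ) - (n : ℚ) ^ 3 / 2 = -((gep w : ℚ) - (n : ℚ) ^ 3 / 2) := by
      ring
    rw [hx, hr.neg_pow]
    ring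
  · intro w hw hne
    intro heq
    apply hne
    have hkey := GepAux.key w (GepAux.entries hw)
    obtain ⟨c1, c2, c3⟩ := GepAux.counts hw
    rw [c1, c2, c3, heq] at hkey
    have : (gep w : ℚ) = (n : ℚ) ^ 3 / 2 := by
      have : ((gep w + gep w : ℕ) : ℚ) = ((n * n * n : ℕ) : ℚ) := by exact_mod_cast hkey
      push_cast at this
      linarith
    rw [this, sub_self, zero_pow hr'.ne']
  · intro w hw
    exact GepAux.map_map_self hw
  · intro w hw
    exact GepAux.map_mem hw
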